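/- For indices i, k with k ≠ i and k ≠ σ(i), and a ∈ R with 2 invertible in R, se_{i,σ(i)}(a) = [se_{ik}(a/2), se_{k,σ(i)}(1)]. -/

import Mathlib

open Matrix

/-- The involution `σ` pairing `2i-1 ↔ 2i` (in 0-indexed form: `2i ↔ 2i+1`).
For even `m` this is exactly the permutation `σ(2i)=2i-1, σ(2i-1)=2i` of the paper. -/
def sesig {m : ℕ} (k : Fin m) : Fin m :=
  if h : (k : ℕ) % 2 = 0 ∧ (k : ℕ) + 1 < m then ⟨(k : ℕ) + 1, h.2⟩
  else ⟨(k : ℕ) - 1, by have := k.2; omega⟩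

/-- The elementary symplectic generator `se_{ij}(z)`. -/
def se {m : ℕ} {R : Type*} [CommRing R] (i j : Fin m) (z : R) :
    Matrix (Fin m) (Fin m) R :=
  if i = sesig j then 1 + Matrix.single i j z
  else 1 + Matrix.single i j z
    - (-1 : R) ^ ((i : ℕ) + (j : ℕ)) • Matrix.single (sesig j) (sesig i) z

/-- The standard symplectic form `ψₙ = Σ e_{2i-1,2i} - Σ e_{2i,2i-1}`. -/
def psi {m : ℕ} (R : Type*) [CommRing R] : Matrix (Fin m) (Fin m) R :=
  Matrix.of fun k l => if l = sesig k then (if (k : ℕ) % 2 = 0 then 1 else -1) else 0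

lemma sesig_val {n : ℕ} (i : Fin (2 * n)) :
    ((sesig i : Fin (2 * n)) : ℕ) = if (i : ℕ) % 2 = 0 then (i : ℕ) + 1 else (i : ℕ) - 1 := by
  have hi := i.2
  unfold sesig
  split
  · next h => simp [h.1]
  · next h =>
    have : ¬ ((i : ℕ) % 2 = 0) := by
      intro he; exact h ⟨he, by omega⟩
    simp [this]

lemma sesig_invol {n : ℕ} (i : Fin (2 * n)) : sesig (sesig i) = i := by
  have hi := i.2
  apply Fin.ext
  rw [sesig_val, sesig_val]
  rcases Nat.even_or_odd (i : ℕ) with h | h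
  · have h0 : (i : ℕ) % 2 = 0 := Nat.even_iff.mp h
    have h1 : ((i:ℕ)+1) % 2 = 1 := by omega
    simp [h0, h1]
  · have h1 : (i : ℕ) % 2 = 1 := Nat.odd_iff.mp h
    have h0 : ((i:ℕ)-1) % 2 = 0 := by omega
    simp [h1, h0]; omega

lemma sesig_ne {n : ℕ} (i : Fin (2 * n)) : sesig i ≠ i := by
  have hi := i.2
  intro h
  have := congrArg (Fin.val) h
  rw [sesig_val] at this
  split at this <;> omega

lemma sesig_parity {n : ℕ} (i : Fin (2 * n)) :
    ((i : ℕ) + ((sesig i : Fin (2*n)) : ℕ)) % 2 = 1 := by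
  have hi := i.2
  rw [sesig_val]
  split <;> omega

/-- `se_{i,σ(i)}(a) = [se_{ik}(a/2), se_{k,σ(i)}(1)]` for `k ≠ i, σ(i)`, with `2` invertible. -/
theorem se_short_as_commutator {n : ℕ} {R : Type*} [CommRing R] [Invertible (2 : R)]
    (i k : Fin (2 * n)) (hki : k ≠ i) (hksi : k ≠ sesig i) (a : R)
    (u v : (Matrix (Fin (2 * n)) (Fin (2 * n)) R)ˣ)
    (hu : (u : Matrix (Fin (2 * n)) (Fin (2 * n)) R) = se i k (⅟(2 : R) * a))
    (hv : (v : Matrix (Fin (2 * n)) (Fin (2 * n)) R) = se k (sesig i) 1) :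
    se i (sesig i) a
      = ((u * v * u⁻¹ * v⁻¹ : (Matrix (Fin (2 * n)) (Fin (2 * n)) R)ˣ) :
          Matrix (Fin (2 * n)) (Fin (2 * n)) R) := by
  set z : R := ⅟(2 : R) * a with hz
  -- inequalities
  have hsik : sesig i ≠ k := Ne.symm hksi
  have hsii : sesig i ≠ i := sesig_ne i
  have hskk : sesig k ≠ k := sesig_ne k
  have hksk : k ≠ sesig k := Ne.symm hskk
  have hsisk : sesig i ≠ sesig k := by
    intro h
    apply hki
    rw [← sesig_invol k, ← h, sesig_invol]
  have hski : sesig k ≠ i := by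
    intro h
    apply hksi
    rw [← h, sesig_invol]
  have hisk : i ≠ sesig k := Ne.symm hski
  -- the three matrices
  set A : Matrix (Fin (2 * n)) (Fin (2 * n)) R :=
    Matrix.single i k z
      - Matrix.single (sesig k) (sesig i) ((-1 : R) ^ ((i : ℕ) + (k : ℕ)) * z) with hA
  set B : Matrix (Fin (2 * n)) (Fin (2 * n)) R :=
    Matrix.single k (sesig i) (1 : R)
      - Matrix.single i (sesig k)
          ((-1 : R) ^ ((k : ℕ) + ((sesig i : Fin (2*n)) : ℕ)) * 1) with hB
  set D : Matrix (Fin (2 * n)) (Fin (2 * n)) R := Matrix.single i (sesig i) z with hD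
  -- unfold the generators
  have hu' : (u : Matrix (Fin (2 * n)) (Fin (2 * n)) R) = 1 + A := by
    rw [hu, se, if_neg hisk, smul_single, smul_eq_mul, hA, add_sub_assoc]
  have hv' : (v : Matrix (Fin (2 * n)) (Fin (2 * n)) R) = 1 + B := by
    rw [hv, se, if_neg (by rw [sesig_invol]; exact hki), smul_single, smul_eq_mul,
      sesig_invol, hB, add_sub_assoc]
  -- product relations
  have hA2 : A * A = 0 := by
    rw [hA]
    simp [sub_mul, mul_sub, hki, hksk, hsii, hsisk]
  have hB2 : B * B = 0 := by
    rw [hB]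
    simp [sub_mul, mul_sub, hsik, hsii, hskk, hski]
  have hAB : A * B = D := by
    rw [hA, hB, hD]
    simp [sub_mul, mul_sub, hki, hsik, hsii]
  have hpow : (-1 : R) ^ ((k : ℕ) + ((sesig i : Fin (2*n)) : ℕ))
      * (-1 : R) ^ ((i : ℕ) + (k : ℕ)) = -1 := by
    rw [← pow_add]
    exact Odd.neg_one_pow (by
      rw [Nat.odd_iff]
      have := sesig_parity i
      omega)
  have hBA : B * A = -D := by
    have hc : (-1 : R) ^ ((k : ℕ) + ((sesig i : Fin (2*n)) : ℕ)) * 1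
        * ((-1 : R) ^ ((i : ℕ) + (k : ℕ)) * z) = -z := by
      rw [mul_one, ← mul_assoc, hpow, neg_one_mul]
    have hneg : Matrix.single i (sesig i) (-z)
        = -Matrix.single i (sesig i) z := by
      rw [← neg_one_smul R (Matrix.single i (sesig i) z), smul_single,
        neg_one_smul]
    rw [hB, hA, hD, sub_mul, mul_sub, mul_sub,
      Matrix.single_mul_single_of_ne (h := hsii), Matrix.single_mul_single_of_ne (h := hsisk),
      Matrix.single_mul_single_of_ne (h := hski), Matrix.single_mul_single_same, hc, hneg]
    abel
  have hAD : A * D = 0 := by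
    rw [hA, hD]
    simp [sub_mul, hki, hsii]
  have hBD : B * D = 0 := by
    rw [hB, hD]
    simp [sub_mul, hsii, hski]
  have hDA : D * A = 0 := by
    rw [hA, hD]
    simp [mul_sub, hsii, hsisk]
  have hDB : D * B = 0 := by
    rw [hB, hD]
    simp [mul_sub, hsik, hsii]
  have hDD : D * D = 0 := by
    rw [hD]
    exact Matrix.single_mul_single_of_ne z i (sesig i) i hsii z
  -- inverses
  have hUmul : ((u : Matrix (Fin (2 * n)) (Fin (2 * n)) R)) * (1 - A) = 1 := by
    rw [hu']
    have : (1 + A) * (1 - A) = 1 + (A - A - A * A) := by noncomm_ring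
    rw [this, hA2]; abel
  have hUinv : ((u⁻¹ : (Matrix (Fin (2 * n)) (Fin (2 * n)) R)ˣ)
      : Matrix (Fin (2 * n)) (Fin (2 * n)) R) = 1 - A := by
    calc ((u⁻¹ : (Matrix (Fin (2 * n)) (Fin (2 * n)) R)ˣ)
          : Matrix (Fin (2 * n)) (Fin (2 * n)) R)
        = ↑u⁻¹ * (↑u * (1 - A)) := by rw [hUmul, mul_one]
      _ = (↑u⁻¹ * ↑u) * (1 - A) := by rw [mul_assoc]
      _ = 1 - A := by simp
  have hVmul : ((v : Matrix (Fin (2 * n)) (Fin (2 * n)) R)) * (1 - B) = 1 := by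
    rw [hv']
    have : (1 + B) * (1 - B) = 1 + (B - B - B * B) := by noncomm_ring
    rw [this, hB2]; abel
  have hVinv : ((v⁻¹ : (Matrix (Fin (2 * n)) (Fin (2 * n)) R)ˣ)
      : Matrix (Fin (2 * n)) (Fin (2 * n)) R) = 1 - B := by
    calc ((v⁻¹ : (Matrix (Fin (2 * n)) (Fin (2 * n)) R)ˣ)
          : Matrix (Fin (2 * n)) (Fin (2 * n)) R)
        = ↑v⁻¹ * (↑v * (1 - B)) := by rw [hVmul, mul_one]
      _ = (↑v⁻¹ * ↑v) * (1 - B) := by rw [mul_assoc]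
      _ = 1 - B := by simp
  -- main computation
  have e1 : ((1 : Matrix (Fin (2 * n)) (Fin (2 * n)) R) + A) * (1 + B) = 1 + A + B + D := by
    have : ((1 : Matrix (Fin (2 * n)) (Fin (2 * n)) R) + A) * (1 + B)
        = 1 + A + B + A * B := by noncomm_ring
    rw [this, hAB]
  have e2 : ((1 : Matrix (Fin (2 * n)) (Fin (2 * n)) R) - A) * (1 - B) = 1 - A - B + D := by
    have : ((1 : Matrix (Fin (2 * n)) (Fin (2 * n)) R) - A) * (1 - B)
        = 1 - A - B + A * B := by noncomm_ring
    rw [this, hAB]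
  have e3 : ((1 : Matrix (Fin (2 * n)) (Fin (2 * n)) R) + A + B + D) * (1 - A - B + D)
      = 1 + D + D := by
    have expand : ((1 : Matrix (Fin (2 * n)) (Fin (2 * n)) R) + A + B + D) * (1 - A - B + D)
        = 1 - A - B + D + (A - A * A - A * B + A * D) + (B - B * A - B * B + B * D)
          + (D - D * A - D * B + D * D) := by noncomm_ring
    rw [expand, hA2, hB2, hAB, hBA, hAD, hBD, hDA, hDB, hDD]
    abel
  have hzz : z + z = a := by
    rw [hz, ← two_mul, ← mul_assoc, mul_invOf_self, one_mul]
  rw [Units.val_mul, Units.val_mul, Units.val_mul, hu', hv', hUinv, hVinv]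
  rw [se, if_pos (sesig_invol i).symm]
  calc (1 : Matrix (Fin (2 * n)) (Fin (2 * n)) R) + Matrix.single i (sesig i) a
      = 1 + D + D := by
        rw [hD, add_assoc, ← Matrix.single_add, hzz]
    _ = (1 + A + B + D) * (1 - A - B + D) := e3.symm
    _ = ((1 + A) * (1 + B)) * ((1 - A) * (1 - B)) := by rw [e1, e2]
    _ = (1 + A) * (1 + B) * (1 - A) * (1 - B) := by noncomm_ring
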